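/- For every natural number n, b(n+1) − b(n) = 2 − c(n); in particular b(n+1) − b(n) ∈ {0, 1, 2}. -/
import Mathlib


/-- The sequence A105774: `a n = n` for `n ≤ 1`, and
`a n = fib (j+1) - a (n - fib j)` where `j ≥ 2` is the unique index
with `fib j < n ≤ fib (j+1)` (realized as the greatest `j ≤ n` with `fib j < n`). -/
def a (n : ℕ) : ℕ :=
  if _h : n ≤ 1 then n
  else
    Nat.fib (Nat.findGreatest (fun j => Nat.fib j < n) n + 1) -
      a (n - Nat.fib (Nat.findGreatest (fun j => Nat.fib j < n) n))
decreasing_by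
  have h2 : 2 ≤ n := by omega
  have hj : 2 ≤ Nat.findGreatest (fun j => Nat.fib j < n) n :=
    Nat.le_findGreatest h2 (by show Nat.fib 2 < n; simp [Nat.fib_two]; omega)
  have hpos : 0 < Nat.fib (Nat.findGreatest (fun j => Nat.fib j < n) n) :=
    Nat.fib_pos.mpr (by omega)
  omega

open Nat Finset

lemma a_zero : a 0 = 0 := by rw [a]; simp
lemma a_one : a 1 = 1 := by rw [a]; simp

lemma fib_lb : ∀ n, n + 1 ≤ fib (n + 2) := by
  intro n
  induction n using Nat.strong_induction_on with
  | _ n ih =>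
    match n with
    | 0 => simp
    | 1 => simp [fib_add_two]
    | (k+2) =>
      have h1 := ih k (by omega)
      have h2 : k + 2 ≤ fib (k + 3) := ih (k+1) (by omega)
      have h3 : fib (k + 4) = fib (k + 2) + fib (k + 3) := fib_add_two
      show k + 3 ≤ fib (k + 4)
      omega

lemma fib_lb' (j : ℕ) : j ≤ fib j + 1 := by
  cases j with
  | zero => simp
  | succ k => cases k with
    | zero => simp
    | succ i =>
      have := fib_lb i
      show i + 2 ≤ fib (i + 2) + 1
      omega

lemma fib_lt_of_lt {k j : ℕ} (hk : 2 ≤ k) (h : fib k < fib j) : k < j := by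
  by_contra hc
  exact absurd (fib_mono (by omega : j ≤ k)) (by omega)

-- block existence
lemma block_exists {m : ℕ} (hm : 2 ≤ m) : ∃ j, 2 ≤ j ∧ fib j < m ∧ m ≤ fib (j+1) := by
  set j := Nat.findGreatest (fun k => fib k < m) m with hj
  have hP : fib j < m := Nat.findGreatest_spec (P := fun k => fib k < m) hm
    (by show fib 2 < m; simp [fib_two]; omega)
  have hj2 : 2 ≤ j := Nat.le_findGreatest hm (by show fib 2 < m; simp [fib_two]; omega)
  refine ⟨j, hj2, hP, ?_⟩
  by_contra hc
  push_neg at hc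
  have hle : j + 1 ≤ m := by have := fib_lb' (j+1); omega
  exact absurd (Nat.findGreatest_is_greatest (P := fun k => fib k < m) (by omega) hle) (by simpa using hc)

lemma a_eq {j m : ℕ} (hj : 2 ≤ j) (h1 : fib j < m) (h2 : m ≤ fib (j+1)) :
    a m = fib (j+1) - a (m - fib j) := by
  have hm : 2 ≤ m := by have : 1 ≤ fib j := Nat.fib_pos.mpr (by omega); omega
  have hfg : Nat.findGreatest (fun k => fib k < m) m = j := by
    rw [Nat.findGreatest_eq_iff]
    refine ⟨by have := fib_lb' j; omega, fun _ => h1, fun k hk hkm => ?_⟩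
    show ¬ fib k < m
    have : fib (j+1) ≤ fib k := fib_mono (by omega)
    omega
  rw [a]
  rw [dif_neg (by omega)]
  rw [hfg]

lemma a_bounds : ∀ m, ∀ j, 2 ≤ j → fib j < m → m ≤ fib (j+1) →
    fib j ≤ a m ∧ a m ≤ fib (j+1) - 1 := by
  intro m
  induction m using Nat.strong_induction_on with
  | _ m ih =>
    intro j hj h1 h2
    have hfj : 1 ≤ fib j := Nat.fib_pos.mpr (by omega)
    have hfj1 : fib (j+1) = fib j + fib (j-1) := by
      have : fib (j - 1 + 2) = fib (j-1) + fib (j-1+1) := fib_add_two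
      have e1 : j - 1 + 2 = j + 1 := by omega
      have e2 : j - 1 + 1 = j := by omega
      rw [e1, e2] at this
      omega
    have hrec := a_eq hj h1 h2
    set m' := m - fib j with hm'
    have hm'1 : 1 ≤ m' := by omega
    have hm'2 : m' ≤ fib (j-1) := by omega
    have hb : 1 ≤ a m' ∧ a m' ≤ fib (j-1) := by
      rcases eq_or_lt_of_le hm'1 with h | h
      · rw [← h, a_one]; omega
      · obtain ⟨k, hk2, hk1, hk2'⟩ := block_exists (by omega : 2 ≤ m')
        have hklt : k + 1 ≤ j - 1 := by
          have : fib k < fib (j-1) := by omega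
          have := fib_lt_of_lt hk2 this
          omega
        have hmlt : m' < m := by omega
        obtain ⟨hb1, hb2⟩ := ih m' hmlt k hk2 hk1 hk2'
        have hfk : 1 ≤ fib k := Nat.fib_pos.mpr (by omega)
        have : fib (k+1) ≤ fib (j-1) := fib_mono hklt
        omega
    rw [hrec]
    omega

lemma a_pos {m : ℕ} (hm : 1 ≤ m) : 1 ≤ a m := by
  rcases eq_or_lt_of_le hm with h | h
  · rw [← h, a_one]
  · obtain ⟨j, hj, h1, h2⟩ := block_exists (by omega : 2 ≤ m)
    have := (a_bounds m j hj h1 h2).1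
    have : 1 ≤ fib j := Nat.fib_pos.mpr (by omega)
    omega

/-- upper bound: values on `[1, fib i]` are at most `fib i` (strictly below for `i ≥ 3`). -/
lemma a_ub {i m : ℕ} (hi : 1 ≤ i) (hm : 1 ≤ m) (hmi : m ≤ fib i) : a m ≤ fib i := by
  rcases eq_or_lt_of_le hm with h | h
  · rw [← h, a_one]; exact Nat.fib_pos.mpr (by omega)
  · obtain ⟨k, hk2, hk1, hk2'⟩ := block_exists (by omega : 2 ≤ m)
    have hki : k + 1 ≤ i := by
      have : fib k < fib i := by omega
      have := fib_lt_of_lt hk2 this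
      omega
    have := (a_bounds m k hk2 hk1 hk2').2
    have : fib (k+1) ≤ fib i := fib_mono hki
    omega

lemma a_ub' {i m : ℕ} (hi : 3 ≤ i) (hm : 1 ≤ m) (hmi : m ≤ fib i) : a m ≤ fib i - 1 := by
  rcases eq_or_lt_of_le hm with h | h
  · rw [← h, a_one]
    have : fib 3 ≤ fib i := fib_mono hi
    simp [show fib 3 = 2 from rfl] at this
    omega
  · obtain ⟨k, hk2, hk1, hk2'⟩ := block_exists (by omega : 2 ≤ m)
    have hki : k + 1 ≤ i := by
      have : fib k < fib i := by omega
      have := fib_lt_of_lt hk2 this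
      omega
    have := (a_bounds m k hk2 hk1 hk2').2
    have h2 : fib (k+1) ≤ fib i := fib_mono hki
    have : 1 ≤ fib (k+1) := Nat.fib_pos.mpr (by omega)
    omega

/-- counting function on initial Fibonacci blocks -/
def D (j x : ℕ) : ℕ := ((Finset.Icc 1 (fib j)).filter (fun m => a m ≤ x)).card

lemma D_le (j x : ℕ) : D j x ≤ fib j := by
  have := Finset.card_filter_le (Finset.Icc 1 (fib j)) (fun m => a m ≤ x)
  simpa [D] using this

lemma D_zero {j : ℕ} : D j 0 = 0 := by
  rw [D, Finset.card_eq_zero, Finset.filter_eq_empty_iff]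
  intro m hm
  simp only [Finset.mem_Icc] at hm
  have := a_pos hm.1
  omega

lemma D_full {j x : ℕ} (hj : 3 ≤ j) (hx : fib j - 1 ≤ x) : D j x = fib j := by
  rw [D]
  have : (Finset.Icc 1 (fib j)).filter (fun m => a m ≤ x) = Finset.Icc 1 (fib j) := by
    rw [Finset.filter_eq_self]
    intro m hm
    simp only [Finset.mem_Icc] at hm
    have := a_ub' hj hm.1 hm.2
    omega
  rw [this, Nat.card_Icc]
  omega

lemma D_rec {j : ℕ} (hj : 2 ≤ j) (x : ℕ) :
    D (j+1) x = D j x + (fib (j-1) - D (j-1) (fib (j+1) - 1 - x)) := by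
  have hfj : 1 ≤ fib j := Nat.fib_pos.mpr (by omega)
  have hfj1 : fib (j+1) = fib j + fib (j-1) := by
    have : fib (j - 1 + 2) = fib (j-1) + fib (j-1+1) := fib_add_two
    have e1 : j - 1 + 2 = j + 1 := by omega
    have e2 : j - 1 + 1 = j := by omega
    rw [e1, e2] at this
    omega
  set y := fib (j+1) - 1 - x with hy
  -- split the interval
  have hsplit : Finset.Icc 1 (fib (j+1)) =
      Finset.Icc 1 (fib j) ∪ Finset.Icc (fib j + 1) (fib (j+1)) := by
    ext m
    simp only [Finset.mem_union, Finset.mem_Icc]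
    omega
  have hdisj : Disjoint ((Finset.Icc 1 (fib j)).filter (fun m => a m ≤ x))
      ((Finset.Icc (fib j + 1) (fib (j+1))).filter (fun m => a m ≤ x)) := by
    apply Finset.disjoint_filter_filter
    rw [Finset.disjoint_left]
    intro m h1 h2
    simp only [Finset.mem_Icc] at h1 h2
    omega
  have hcard : D (j+1) x = D j x +
      ((Finset.Icc (fib j + 1) (fib (j+1))).filter (fun m => a m ≤ x)).card := by
    rw [D, hsplit, Finset.filter_union, Finset.card_union_of_disjoint hdisj, D]
  rw [hcard]
  congr 1
  -- second block via reflection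
  have himg : (Finset.Icc (fib j + 1) (fib (j+1))).filter (fun m => a m ≤ x) =
      ((Finset.Icc 1 (fib (j-1))).filter (fun m => ¬ a m ≤ y)).image (· + fib j) := by
    ext m
    simp only [Finset.mem_image, Finset.mem_filter, Finset.mem_Icc]
    constructor
    · rintro ⟨⟨hm1, hm2⟩, hax⟩
      refine ⟨m - fib j, ⟨⟨by omega, by omega⟩, ?_⟩, by omega⟩
      have hrec := a_eq hj (by omega) hm2
      have h1 : 1 ≤ a (m - fib j) := a_pos (by omega)
      have h2 : a (m - fib j) ≤ fib (j-1) := a_ub (by omega) (by omega) (by omega)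
      omega
    · rintro ⟨m', ⟨⟨hm1, hm2⟩, hay⟩, rfl⟩
      refine ⟨⟨by omega, by omega⟩, ?_⟩
      have hrec := a_eq hj (by omega : fib j < m' + fib j) (by omega)
      have hsub : m' + fib j - fib j = m' := by omega
      rw [hsub] at hrec
      have h1 : 1 ≤ a m' := a_pos hm1
      omega
  rw [himg, Finset.card_image_of_injective _ (add_left_injective _)]
  have := Finset.card_filter_add_card_filter_not
    (s := Finset.Icc 1 (fib (j-1))) (p := fun m => a m ≤ y)
  rw [Nat.card_Icc] at this
  rw [D]
  omega

lemma a_two : a 2 = 1 := by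
  have := a_eq (j := 2) (m := 2) le_rfl (by decide) (by decide)
  simpa [a_one, show fib 3 = 2 by decide, show fib 2 = 1 by decide] using this

lemma a_three : a 3 = 2 := by
  have := a_eq (j := 3) (m := 3) (by omega) (by decide) (by decide)
  simpa [a_one, show fib 4 = 3 by decide, show fib 3 = 2 by decide] using this

lemma D_two (x : ℕ) : D 2 x = if 1 ≤ x then 1 else 0 := by
  rw [D, show fib 2 = 1 by decide, show Finset.Icc 1 1 = {1} by rfl]
  by_cases h : 1 ≤ x <;> simp [Finset.filter_singleton, a_one, h] <;> omega

lemma D_three (x : ℕ) : D 3 x = if 1 ≤ x then 2 else 0 := by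
  rw [D, show fib 3 = 2 by decide, show Finset.Icc 1 2 = {1, 2} by rfl]
  by_cases h : 1 ≤ x <;>
    simp [Finset.filter_insert, Finset.filter_singleton, a_one, a_two, h] <;> omega

lemma D_four (x : ℕ) : D 4 x = if 2 ≤ x then 3 else if 1 ≤ x then 2 else 0 := by
  rw [D, show fib 4 = 3 by decide, show Finset.Icc 1 3 = {1, 2, 3} by rfl]
  rcases Nat.lt_or_ge x 1 with h | h
  · have hx : x = 0 := by omega
    subst hx
    simp [Finset.filter_insert, Finset.filter_singleton, a_one, a_two, a_three]
  rcases Nat.lt_or_ge x 2 with h2 | h2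
  · have hx : x = 1 := by omega
    subst hx
    simp [Finset.filter_insert, Finset.filter_singleton, a_one, a_two, a_three]
  · simp [Finset.filter_insert, Finset.filter_singleton, a_one, a_two, a_three,
      h2, show 1 ≤ x by omega, show a 2 ≤ x by rw [a_two]; omega,
      show a 3 ≤ x by rw [a_three]; omega, show a 1 ≤ x by rw [a_one]; omega]

lemma IC : ∀ j, 2 ≤ j → (∀ x, x ≤ fib j → x ≤ D j x) ∧ (∀ x, D j x ≤ x + 1) := by
  intro j
  induction j using Nat.strong_induction_on with
  | _ j ih =>
    intro hj
    match j, hj with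
    | 2, _ =>
      constructor
      · intro x hx
        rw [show fib 2 = 1 by decide] at hx
        rw [D_two]
        split <;> omega
      · intro x; rw [D_two]; split <;> omega
    | 3, _ =>
      constructor
      · intro x hx
        rw [show fib 3 = 2 by decide] at hx
        rw [D_three]
        split <;> omega
      · intro x; rw [D_three]; split <;> omega
    | 4, _ =>
      constructor
      · intro x hx
        rw [show fib 4 = 3 by decide] at hx
        rw [D_four]
        split
        · omega
        · split <;> omega
      · intro x
        rw [D_four]
        split
        · omega
        · split <;> omega
    | (i+5), _ =>
      -- step: j = i + 5 = (i+4) + 1, uses i+4 and i+3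
      set k := i + 4 with hk
      have hk4 : 4 ≤ k := by omega
      obtain ⟨Lk, Uk⟩ := ih k (by omega) (by omega)
      obtain ⟨Lk1, Uk1⟩ := ih (k-1) (by omega) (by omega)
      have hfk1 : fib (k+1) = fib k + fib (k-1) := by
        have : fib (k - 1 + 2) = fib (k-1) + fib (k-1+1) := fib_add_two
        have e1 : k - 1 + 2 = k + 1 := by omega
        have e2 : k - 1 + 1 = k := by omega
        rw [e1, e2] at this
        omega
      have hfkpos : 1 ≤ fib (k-1) := Nat.fib_pos.mpr (by omega)
      have hfkpos' : 1 ≤ fib k := Nat.fib_pos.mpr (by omega)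
      have hfmono : fib (k-1) ≤ fib k := fib_mono (by omega)
      have hgoal : (∀ x, x ≤ fib (k+1) → x ≤ D (k+1) x) ∧ (∀ x, D (k+1) x ≤ x + 1) := by
        constructor
        · intro x hx
          have hrec := D_rec (by omega : 2 ≤ k) x
          rcases Nat.lt_or_ge x (fib k) with hcase | hcase
          · -- x ≤ fib k - 1, second term vanishes
            have hy : fib (k-1) - 1 ≤ fib (k+1) - 1 - x := by omega
            have hDfull : D (k-1) (fib (k+1) - 1 - x) = fib (k-1) :=
              D_full (by omega) hy
            have := Lk x (by omega)
            omega
          · -- x ≥ fib k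
            have hDfullk : D k x = fib k := D_full (by omega) (by omega)
            rcases Nat.eq_or_lt_of_le hx with hx1 | hx1
            · -- x = fib (k+1)
              have hy0 : fib (k+1) - 1 - x = 0 := by omega
              rw [hrec, hDfullk, hy0, D_zero]
              omega
            · have hyle : fib (k+1) - 1 - x ≤ fib (k-1) := by omega
              have hU := Uk1 (fib (k+1) - 1 - x)
              have hDle := D_le (k-1) (fib (k+1) - 1 - x)
              omega
        · intro x
          have hrec := D_rec (by omega : 2 ≤ k) x
          rcases Nat.lt_or_ge x (fib k) with hcase | hcase
          · have hy : fib (k-1) - 1 ≤ fib (k+1) - 1 - x := by omega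
            have hDfull : D (k-1) (fib (k+1) - 1 - x) = fib (k-1) :=
              D_full (by omega) hy
            have := Uk x
            omega
          · have hDfullk : D k x = fib k := D_full (by omega) (by omega)
            have hyle : fib (k+1) - 1 - x ≤ fib (k-1) := by omega
            have hL := Lk1 (fib (k+1) - 1 - x) (by omega)
            have hDle := D_le (k-1) (fib (k+1) - 1 - x)
            omega
      exact hgoal


/-- `c n` is the number of indices `m` with `a m = n`. -/
noncomputable def c (n : ℕ) : ℕ := {m : ℕ | a m = n}.ncard

/-- `b n` is the `n`-th term (0-indexed) of the values of `a` arranged in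
nondecreasing order with multiplicity: the least `x` with `#{m | a m ≤ x} ≥ n + 1`
(OEIS A368200). -/
noncomputable def b (n : ℕ) : ℕ := sInf {x : ℕ | n + 1 ≤ {m : ℕ | a m ≤ x}.ncard}

lemma Nset_eq (x : ℕ) : {m : ℕ | a m ≤ x} =
    ↑(insert 0 ((Finset.Icc 1 (fib (x+3))).filter (fun m => a m ≤ x))) := by
  have hfx : x + 2 ≤ fib (x + 3) := by
    have := fib_lb (x + 1)
    have e : x + 1 + 2 = x + 3 := by omega
    rw [e] at this
    omega
  ext m
  simp only [Set.mem_setOf_eq, Finset.coe_insert, Set.mem_insert_iff, Finset.mem_coe,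
    Finset.mem_filter, Finset.mem_Icc]
  constructor
  · intro ham
    rcases Nat.eq_zero_or_pos m with h0 | h1
    · left; exact h0
    right
    refine ⟨⟨h1, ?_⟩, ham⟩
    by_contra hc
    push_neg at hc
    obtain ⟨k, hk2, hk1, hk2'⟩ := block_exists (by omega : 2 ≤ m)
    have hkx : x + 3 ≤ k := by
      by_contra hc2
      push_neg at hc2
      have : fib (k+1) ≤ fib (x+3) := fib_mono (by omega)
      omega
    have := (a_bounds m k hk2 hk1 hk2').1
    have : fib (x+3) ≤ fib k := fib_mono hkx
    omega
  · rintro (rfl | ⟨⟨_, _⟩, h⟩)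
    · rw [a_zero]; omega
    · exact h

lemma Nval_eq (x : ℕ) : {m : ℕ | a m ≤ x}.ncard = 1 + D (x+3) x := by
  rw [Nset_eq, Set.ncard_coe_finset, Finset.card_insert_of_notMem (by simp), D]
  omega

lemma Nval_lb (x : ℕ) : x + 1 ≤ {m : ℕ | a m ≤ x}.ncard := by
  rw [Nval_eq]
  have hfx : x ≤ fib (x+3) := by
    have := fib_lb (x + 1)
    have e : x + 1 + 2 = x + 3 := by omega
    rw [e] at this
    omega
  have := (IC (x+3) (by omega)).1 x hfx
  omega

lemma Nval_ub (x : ℕ) : {m : ℕ | a m ≤ x}.ncard ≤ x + 2 := by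
  rw [Nval_eq]
  have := (IC (x+3) (by omega)).2 x
  omega

lemma sInf_eq_of {S : Set ℕ} {k : ℕ} (hk : k ∈ S) (hlt : ∀ x < k, x ∉ S) : sInf S = k := by
  refine le_antisymm (Nat.sInf_le hk) ?_
  by_contra hc
  push_neg at hc
  exact hlt _ hc (Nat.sInf_mem ⟨k, hk⟩)

lemma b_zero : b 0 = 0 := by
  apply sInf_eq_of
  · simpa using Nval_lb 0
  · omega

lemma b_succ (n : ℕ) : b (n+1) =
    if {m : ℕ | a m ≤ n}.ncard = n + 2 then n else n + 1 := by
  have hub := Nval_ub n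
  have hlb := Nval_lb n
  have hnotlt : ∀ x < n, x ∉ {x : ℕ | n + 1 + 1 ≤ {m : ℕ | a m ≤ x}.ncard} := by
    intro x hx hmem
    simp only [Set.mem_setOf_eq] at hmem
    have := Nval_ub x
    omega
  split
  · next h =>
    apply sInf_eq_of
    · simp only [Set.mem_setOf_eq]; omega
    · exact hnotlt
  · next h =>
    apply sInf_eq_of
    · simp only [Set.mem_setOf_eq]
      have := Nval_lb (n+1)
      omega
    · intro x hx hmem
      simp only [Set.mem_setOf_eq] at hmem
      rcases Nat.lt_or_ge x n with h2 | h2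
      · exact hnotlt x h2 hmem
      · have : x = n := by omega
        subst this
        omega

lemma Nset_finite (x : ℕ) : {m : ℕ | a m ≤ x}.Finite := by
  rw [Nset_eq]
  exact Finset.finite_toSet _

lemma c_zero : c 0 = {m : ℕ | a m ≤ 0}.ncard := by
  rw [c]
  congr 1
  ext m
  simp only [Set.mem_setOf_eq]
  omega

lemma c_succ (n : ℕ) : c (n+1) = {m : ℕ | a m ≤ n+1}.ncard - {m : ℕ | a m ≤ n}.ncard := by
  rw [c]
  have hdiff : {m : ℕ | a m = n+1} = {m : ℕ | a m ≤ n+1} \ {m : ℕ | a m ≤ n} := by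
    ext m
    simp only [Set.mem_setOf_eq, Set.mem_diff]
    omega
  rw [hdiff, Set.ncard_diff (fun m hm => by simp only [Set.mem_setOf_eq] at *; omega)
    (Nset_finite n)]

/-- For every `n`, `b (n+1) - b n = 2 - c n`; in particular
`b (n+1) - b n ∈ {0, 1, 2}`. -/
theorem a368200_first_difference (n : ℕ) :
    (b (n + 1) : ℤ) - b n = 2 - c n ∧
      (b (n + 1) : ℤ) - b n ∈ ({0, 1, 2} : Set ℤ) := by
  have main : (b (n + 1) : ℤ) - b n = 2 - c n ∧ (c n : ℤ) ≤ 2 := by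
    cases n with
    | zero =>
      rw [b_zero, b_succ, c_zero]
      have h1 := Nval_lb 0
      have h2 := Nval_ub 0
      split <;> [skip; skip] <;>
      · next h => push_cast; omega
    | succ m =>
      rw [b_succ, b_succ, c_succ]
      have h1 := Nval_lb m
      have h2 := Nval_ub m
      have h3 := Nval_lb (m+1)
      have h4 := Nval_ub (m+1)
      have hle : {m' : ℕ | a m' ≤ m}.ncard ≤ {m' : ℕ | a m' ≤ m+1}.ncard := by omega
      rw [Nat.cast_sub hle]
      split <;> split <;> push_cast <;> omega
  refine ⟨main.1, ?_⟩
  rw [main.1]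
  have : (0 : ℤ) ≤ c n := Int.natCast_nonneg _
  simp only [Set.mem_insert_iff, Set.mem_singleton_iff]
  omega
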